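/- Let T > 0 and λ > 0. Let h : ℝ × ℝ → ℝ be continuous, T-periodic in the first variable, and satisfy (h0) and (h1). Let a : ℝ → ℝ be a locally integrable T-periodic function. Let g : [0,+∞) → [0,+∞) be continuously differentiable with g(s) > 0 and g'(s) > 0 for every s > 0. If (u,v) is a T-periodic solution of the system u' = h(t,v), v' = -λ a(t) g(u) with u(t) > 0 for all t ∈ ℝ and v not identically zero, then ∫₀ᵀ a(t) dt < 0. -/

import Mathlib

open MeasureTheory Set Filter

/-- Fubini-type integration by parts for an integrable `G` and continuous `w`. -/
lemma fubini_parts (T : ℝ) (hT : 0 ≤ T) (G w : ℝ → ℝ)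
    (hG : IntegrableOn G (Ioc 0 T) volume) (hw : Continuous w) :
    ∫ s in (0:ℝ)..T, G s * (∫ r in (0:ℝ)..s, w r)
      = ∫ r in (0:ℝ)..T, (∫ s in r..T, G s) * w r := by
  set F : ℝ × ℝ → ℝ := fun p => {q : ℝ × ℝ | q.2 ≤ q.1}.indicator (fun q => G q.1 * w q.2) p
    with hF
  have hFmeas : MeasurableSet {q : ℝ × ℝ | q.2 ≤ q.1} := measurableSet_le measurable_snd
    measurable_fst
  have hwint : IntegrableOn w (Ioc 0 T) volume := hw.integrableOn_Ioc
  have hFint : Integrable F ((volume.restrict (Ioc 0 T)).prod (volume.restrict (Ioc 0 T))) :=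
    (hG.mul_prod hwint).indicator hFmeas
  have swap := MeasureTheory.integral_integral_swap (f := fun s r => F (s, r))
    (μ := volume.restrict (Ioc 0 T)) (ν := volume.restrict (Ioc 0 T)) hFint
  rw [intervalIntegral.integral_of_le hT, intervalIntegral.integral_of_le hT]
  have lhs : ∫ s in Ioc 0 T, G s * (∫ r in (0:ℝ)..s, w r)
      = ∫ s in Ioc 0 T, ∫ r in Ioc 0 T, F (s, r) := by
    refine setIntegral_congr_fun measurableSet_Ioc (fun s hs => ?_)
    have h1 : (fun r => F (s, r)) = (Iic s).indicator (fun r => G s * w r) := by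
      funext r
      by_cases hr : r ≤ s <;> simp [F, Set.indicator, hr]
    rw [h1, setIntegral_indicator measurableSet_Iic, Set.Ioc_inter_Iic,
      min_eq_right hs.2, intervalIntegral.integral_of_le hs.1.le,
      MeasureTheory.integral_const_mul]
  have rhs : ∫ r in Ioc 0 T, ∫ s in Ioc 0 T, F (s, r)
      = ∫ r in Ioc 0 T, (∫ s in r..T, G s) * w r := by
    refine setIntegral_congr_fun measurableSet_Ioc (fun r hr => ?_)
    have h1 : (fun s => F (s, r)) = (Ici r).indicator (fun s => G s * w r) := by
      funext s
      by_cases hs : r ≤ s <;> simp [F, Set.indicator, hs]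
    have h2 : Ioc 0 T ∩ Ici r = Icc r T := by
      ext s
      simp only [mem_inter_iff, mem_Ioc, mem_Ici, mem_Icc]
      constructor
      · rintro ⟨⟨_, h2⟩, h3⟩; exact ⟨h3, h2⟩
      · rintro ⟨h1', h2⟩; exact ⟨⟨lt_of_lt_of_le hr.1 h1', h2⟩, h1'⟩
    rw [h1, setIntegral_indicator measurableSet_Ici, h2, integral_Icc_eq_integral_Ioc,
      ← intervalIntegral.integral_of_le hr.2, intervalIntegral.integral_mul_const]
  rw [lhs, swap, rhs]

/-- A continuous nonnegative function, positive at a point of `[0,T)`, has positive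
integral on `[0,T]`. -/
lemma pos_integral (T : ℝ) (f : ℝ → ℝ) (hf : Continuous f) (hnn : ∀ x, 0 ≤ f x)
    (c₀ : ℝ) (hc₀ : 0 ≤ c₀) (hc₀T : c₀ < T) (hfc : 0 < f c₀) :
    0 < ∫ x in (0:ℝ)..T, f x := by
  have hT : (0:ℝ) ≤ T := le_trans hc₀ hc₀T.le
  rw [intervalIntegral.integral_of_le hT]
  rw [setIntegral_pos_iff_support_of_nonneg_ae
    (Filter.Eventually.of_forall fun x => hnn x) (hf.integrableOn_Ioc)]
  obtain ⟨δ, hδ, hball⟩ := Metric.isOpen_iff.1 (isOpen_Ioi.preimage hf) c₀ hfc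
  set m := min (c₀ + δ) T with hm
  have hc₀m : c₀ < m := lt_min (by linarith) hc₀T
  have hsub : Ioo c₀ m ⊆ Function.support f ∩ Ioc 0 T := by
    intro x hx
    constructor
    · have : x ∈ Metric.ball c₀ δ := by
        rw [Real.ball_eq_Ioo]
        exact ⟨by linarith [hx.1], lt_of_lt_of_le hx.2 (le_trans (min_le_left _ _) le_rfl)⟩
      exact ne_of_gt (hball this)
    · exact ⟨lt_of_le_of_lt hc₀ hx.1, le_trans hx.2.le (min_le_right _ _)⟩
  calc (0:ENNReal) < volume (Ioo c₀ m) := by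
        rw [Real.volume_Ioo]; exact ENNReal.ofReal_pos.2 (by linarith)
    _ ≤ volume (Function.support f ∩ Ioc 0 T) := measure_mono hsub

noncomputable section

/-- `(u, v)` is a `T`-periodic solution of the planar system `u' = F t (v t)`,
`v' = G t (u t)`: both components are continuous, `T`-periodic, and are primitives
(in the sense of the integral form, equivalent to absolute continuity plus the
differential equations holding almost everywhere) of the right-hand sides. -/
def IsPeriodicSol (T : ℝ) (F G : ℝ → ℝ → ℝ) (u v : ℝ → ℝ) : Prop :=
  Continuous u ∧ Continuous v ∧
  Function.Periodic u T ∧ Function.Periodic v T ∧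
  (∀ t₁ t₂ : ℝ, IntervalIntegrable (fun s => F s (v s)) volume t₁ t₂) ∧
  (∀ t₁ t₂ : ℝ, IntervalIntegrable (fun s => G s (u s)) volume t₁ t₂) ∧
  (∀ t : ℝ, u t = u 0 + ∫ s in (0:ℝ)..t, F s (v s)) ∧
  (∀ t : ℝ, v t = v 0 + ∫ s in (0:ℝ)..t, G s (u s))

theorem statement13
    (T : ℝ) (hT : 0 < T) (lam : ℝ) (hlam : 0 < lam)
    (h : ℝ → ℝ → ℝ) (hhc : Continuous (Function.uncurry h))
    (hhper : ∀ t s : ℝ, h (t + T) s = h t s)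
    (hh0 : ∀ t : ℝ, h t 0 = 0)
    (hh1 : ∀ t : ℝ, StrictMono (h t))
    (a : ℝ → ℝ) (haloc : LocallyIntegrable a volume)
    (haper : Function.Periodic a T)
    (g : ℝ → ℝ) (hgdiff : ContDiffOn ℝ 1 g (Set.Ioi 0))
    (hgpos : ∀ s : ℝ, 0 < s → 0 < g s)
    (hg'pos : ∀ s : ℝ, 0 < s → 0 < deriv g s)
    (u v : ℝ → ℝ)
    (hsol : IsPeriodicSol T h (fun t x => -(lam * a t * g x)) u v)
    (hupos : ∀ t, 0 < u t)
    (hvnt : ¬ (∀ t : ℝ, v t = 0)) :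
    (∫ t in (0:ℝ)..T, a t) < 0 := by
  obtain ⟨hucont, hvcont, huper, hvper, hFint, hGint, huint, hvint⟩ := hsol
  set c : ℝ → ℝ := fun t => h t (v t) with hc
  have hccont : Continuous c := hhc.comp (continuous_id.prodMk hvcont)
  have huderiv : ∀ t, HasDerivAt u (c t) t := by
    intro t
    have h1 : HasDerivAt (fun x => ∫ s in (0:ℝ)..x, c s) (c t) t :=
      intervalIntegral.integral_hasDerivAt_right (hccont.intervalIntegrable 0 t)
        hccont.aestronglyMeasurable.stronglyMeasurableAtFilter hccont.continuousAt
    have hu' : u = fun x => u 0 + ∫ s in (0:ℝ)..x, c s := funext huint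
    rw [hu']
    exact h1.const_add (u 0)
  have hgd : ∀ t, HasDerivAt g (deriv g (u t)) (u t) := fun t =>
    ((hgdiff.contDiffAt (Ioi_mem_nhds (hupos t))).differentiableAt one_ne_zero).hasDerivAt
  set gu : ℝ → ℝ := fun t => g (u t) with hgu
  have hgupos : ∀ t, 0 < gu t := fun t => hgpos _ (hupos t)
  have hgucont : Continuous gu :=
    hgdiff.continuousOn.comp_continuous hucont fun t => hupos t
  set dgu : ℝ → ℝ := fun t => deriv g (u t) with hdgu
  have hdgucont : Continuous dgu :=
    (hgdiff.continuousOn_deriv_of_isOpen isOpen_Ioi le_rfl).comp_continuous hucont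
      fun t => hupos t
  set φ : ℝ → ℝ := fun t => (gu t)⁻¹ with hφdef
  set ψ : ℝ → ℝ := fun t => dgu t * c t / (gu t) ^ 2 with hψdef
  have hφcont : Continuous φ := hgucont.inv₀ fun t => (hgupos t).ne'
  have hψcont : Continuous ψ :=
    (hdgucont.mul hccont).div (hgucont.pow 2) fun t => pow_ne_zero _ (hgupos t).ne'
  have hφderiv : ∀ t, HasDerivAt φ (-ψ t) t := by
    intro t
    have h1 : HasDerivAt gu (dgu t * c t) t := (hgd t).comp t (huderiv t)
    have h2 := h1.inv (hgupos t).ne'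
    have h3 : HasDerivAt φ (-(dgu t * c t) / gu t ^ 2) t := h2
    rw [neg_div] at h3
    exact h3
  have hφFTC : ∀ s, ∫ r in (0:ℝ)..s, (-ψ r) = φ s - φ 0 := fun s =>
    intervalIntegral.integral_eq_sub_of_hasDerivAt (fun t _ => hφderiv t)
      (hψcont.neg.intervalIntegrable 0 s)
  set G : ℝ → ℝ := fun t => -(lam * a t * g (u t)) with hGdef
  have hvT : v T = v 0 := by have := hvper 0; simpa using this
  have huT : u T = u 0 := by have := huper 0; simpa using this
  have hintG0T : ∫ s in (0:ℝ)..T, G s = 0 := by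
    have e1 := hvint T
    rw [hvT] at e1
    linarith
  have hintG : ∀ r, ∫ s in r..T, G s = v 0 - v r := by
    intro r
    have e1 : ∫ s in (0:ℝ)..r, G s = v r - v 0 := by
      have := hvint r; linarith
    have hadd := intervalIntegral.integral_add_adjacent_intervals (hGint 0 r) (hGint r T)
    rw [e1, hintG0T] at hadd
    linarith
  have hψint0 : ∫ r in (0:ℝ)..T, ψ r = 0 := by
    have e1 := hφFTC T
    have e2 : φ T = φ 0 := by simp [hφdef, hgu, huT]
    rw [e2, sub_self, intervalIntegral.integral_neg, neg_eq_zero] at e1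
    exact e1
  have hinner : Continuous (fun s => ∫ r in (0:ℝ)..s, (-ψ r)) := by
    have e : (fun s => ∫ r in (0:ℝ)..s, (-ψ r)) = fun s => φ s - φ 0 := funext hφFTC
    rw [e]; exact hφcont.sub continuous_const
  have key : -(lam * ∫ t in (0:ℝ)..T, a t) = ∫ r in (0:ℝ)..T, v r * ψ r := by
    calc -(lam * ∫ t in (0:ℝ)..T, a t) = ∫ s in (0:ℝ)..T, G s * φ s := by
          rw [← intervalIntegral.integral_const_mul, ← intervalIntegral.integral_neg]
          apply intervalIntegral.integral_congr
          intro s _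
          have hne : gu s ≠ 0 := (hgupos s).ne'
          show -(lam * a s) = G s * φ s
          simp only [hGdef, hφdef, hgu]
          field_simp
          have hne' : g (u s) ≠ 0 := hne
          rw [mul_div_assoc, div_self hne', mul_one]
      _ = ∫ s in (0:ℝ)..T, (G s * φ 0 + G s * (∫ r in (0:ℝ)..s, (-ψ r))) := by
          apply intervalIntegral.integral_congr
          intro s _
          show G s * φ s = G s * φ 0 + G s * ∫ r in (0:ℝ)..s, (-ψ r)
          rw [hφFTC s]
          ring
      _ = (∫ s in (0:ℝ)..T, G s * φ 0)
            + ∫ s in (0:ℝ)..T, G s * (∫ r in (0:ℝ)..s, (-ψ r)) := by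
          exact intervalIntegral.integral_add ((hGint 0 T).mul_const (φ 0))
            ((hGint 0 T).mul_continuousOn hinner.continuousOn)
      _ = ∫ s in (0:ℝ)..T, G s * (∫ r in (0:ℝ)..s, (-ψ r)) := by
          rw [intervalIntegral.integral_mul_const, hintG0T, zero_mul, zero_add]
      _ = ∫ r in (0:ℝ)..T, (∫ s in r..T, G s) * (-ψ r) := by
          exact fubini_parts T hT.le G (fun r => -ψ r) (hGint 0 T).1 hψcont.neg
      _ = ∫ r in (0:ℝ)..T, (v r * ψ r - v 0 * ψ r) := by
          apply intervalIntegral.integral_congr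
          intro r _
          show (∫ s in r..T, G s) * (-ψ r) = v r * ψ r - v 0 * ψ r
          rw [hintG r]
          ring
      _ = (∫ r in (0:ℝ)..T, v r * ψ r) - v 0 * ∫ r in (0:ℝ)..T, ψ r := by
          rw [← intervalIntegral.integral_const_mul]
          exact intervalIntegral.integral_sub
            ((hvcont.mul hψcont).intervalIntegrable 0 T)
            ((continuous_const.mul hψcont).intervalIntegrable 0 T)
      _ = ∫ r in (0:ℝ)..T, v r * ψ r := by rw [hψint0, mul_zero, sub_zero]
  -- nonnegativity of the integrand
  have hvc : ∀ r, 0 ≤ v r * c r := by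
    intro r
    rcases lt_trichotomy (v r) 0 with hv | hv | hv
    · have : c r < 0 := by
        have := (hh1 r) hv
        rwa [hh0 r] at this
      exact le_of_lt (mul_pos_of_neg_of_neg hv this)
    · simp [hv]
    · have : 0 < c r := by
        have := (hh1 r) hv
        rwa [hh0 r] at this
      exact le_of_lt (mul_pos hv this)
  have hnn : ∀ r, 0 ≤ v r * ψ r := by
    intro r
    have e : v r * ψ r = (v r * c r) * dgu r / (gu r) ^ 2 := by
      simp only [hψdef]; ring
    rw [e]
    exact div_nonneg (mul_nonneg (hvc r) (hg'pos _ (hupos r)).le) (pow_nonneg (hgupos r).le 2)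
  -- strict positivity at some point in [0, T)
  obtain ⟨t₀, hvt₀⟩ := not_forall.1 hvnt
  obtain ⟨c₀, hc₀mem, hc₀eq⟩ := hvper.exists_mem_Ico₀ hT t₀
  have hvc₀ : v c₀ ≠ 0 := by rw [← hc₀eq]; exact hvt₀
  have hfc : 0 < v c₀ * ψ c₀ := by
    have e : v c₀ * ψ c₀ = (v c₀ * c c₀) * dgu c₀ / (gu c₀) ^ 2 := by
      simp only [hψdef]; ring
    rw [e]
    apply div_pos _ (pow_pos (hgupos c₀) 2)
    apply mul_pos _ (hg'pos _ (hupos c₀))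
    rcases lt_or_gt_of_ne hvc₀ with hv | hv
    · have : c c₀ < 0 := by have := (hh1 c₀) hv; rwa [hh0 c₀] at this
      exact mul_pos_of_neg_of_neg hv this
    · have : 0 < c c₀ := by have := (hh1 c₀) hv; rwa [hh0 c₀] at this
      exact mul_pos hv this
  have hpos : 0 < ∫ r in (0:ℝ)..T, v r * ψ r :=
    pos_integral T (fun r => v r * ψ r) (hvcont.mul hψcont) hnn c₀ hc₀mem.1 hc₀mem.2 hfc
  by_contra hcon
  push_neg at hcon
  have : 0 ≤ lam * ∫ t in (0:ℝ)..T, a t := mul_nonneg hlam.le hcon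
  linarith [key ▸ hpos]
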